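/- Satisfiability of a quantifier-free symbolic heap A = (Π_A : *_{i=1}^ℓ t_i ↦ t'_i) in SL pointer arithmetic is equivalent to satisfiability of the Presburger formula γ_A = Π_A ∧ ⋀_{1 ≤ i < j ≤ ℓ} (t_i ≤ t_j − 1 ∨ t_j ≤ t_i − 1): every stack-heap model (s,h) of A yields a valuation satisfying γ_A, and conversely every valuation satisfying γ_A yields a heap h such that (s,h) ⊨ A. -/

import Mathlib

/-- Terms of SL pointer arithmetic: variables, constant offsets and sums. -/
inductive SLTerm (V : Type) : Type
  | var : V → SLTerm V
  | addConst : SLTerm V → ℕ → SLTerm V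
  | add : SLTerm V → SLTerm V → SLTerm V

/-- Evaluation of a term under a stack. -/
def SLTerm.eval {V : Type} (s : V → ℕ) : SLTerm V → ℕ
  | .var v => s v
  | .addConst t k => t.eval s + k
  | .add t u => t.eval s + u.eval s

/-- Heaps: partial functions from locations to values. -/
abbrev Heap := ℕ → Option ℕ

def Heap.emp : Heap := fun _ => none

def Heap.disjoint (h₁ h₂ : Heap) : Prop := ∀ a, h₁ a = none ∨ h₂ a = none

def Heap.union (h₁ h₂ : Heap) : Heap := fun a => (h₁ a).orElse (fun _ => h₂ a)

/-- Spatial formulas: `emp`, points-to, and separating conjunction. -/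
inductive SpForm (V : Type) : Type
  | emp : SpForm V
  | pts : SLTerm V → SLTerm V → SpForm V
  | star : SpForm V → SpForm V → SpForm V

/-- Satisfaction of spatial formulas. -/
def SpForm.sat {V : Type} (s : V → ℕ) : Heap → SpForm V → Prop
  | h, .emp => h = Heap.emp
  | h, .pts t t' => ∀ a, h a = if a = t.eval s then some (t'.eval s) else none
  | h, .star F₁ F₂ => ∃ h₁ h₂, Heap.disjoint h₁ h₂ ∧ h = Heap.union h₁ h₂ ∧
      SpForm.sat s h₁ F₁ ∧ SpForm.sat s h₂ F₂

/-- Iterated separating conjunction of a list of points-to assertions. -/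
def starList {V : Type} : List (SLTerm V × SLTerm V) → SpForm V
  | [] => .emp
  | p :: ps => .star (.pts p.1 p.2) (starList ps)

/-- Satisfiability of a symbolic heap `Π_A : *_i t_i ↦ t'_i` is equivalent
to satisfiability of `γ_A = Π_A ∧ pairwise-distinctness of the t_i`:
every stack-heap model of `A` yields a valuation satisfying `γ_A`
(the same stack works), and conversely every stack satisfying `γ_A`
yields a heap modelling `A`. -/
lemma sat_mem_dom {V : Type} (s : V → ℕ) :
    ∀ (L : List (SLTerm V × SLTerm V)) (h : Heap),
      SpForm.sat s h (starList L) → ∀ p ∈ L, h (p.1.eval s) ≠ none := by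
  intro L
  induction L with
  | nil => intro h _ p hp; simp at hp
  | cons q L ih =>
    rintro h ⟨h₁, h₂, hd, rfl, h1s, h2s⟩ p hp
    rcases List.mem_cons.1 hp with rfl | hp
    · have := h1s (p.1.eval s)
      simp [Heap.union, this, Option.orElse]
    · have := ih h₂ h2s p hp
      simp only [Heap.union, Option.orElse]
      cases hh : h₁ (p.1.eval s) <;> simp [hh, this]

lemma sat_pairwise {V : Type} (s : V → ℕ) :
    ∀ (L : List (SLTerm V × SLTerm V)) (h : Heap),
      SpForm.sat s h (starList L) →
      L.Pairwise (fun p q => p.1.eval s ≠ q.1.eval s) := by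
  intro L
  induction L with
  | nil => intro h _; exact List.Pairwise.nil
  | cons q L ih =>
    rintro h ⟨h₁, h₂, hd, rfl, h1s, h2s⟩
    refine List.Pairwise.cons ?_ (ih h₂ h2s)
    intro p hp heq
    have hmem := sat_mem_dom s L h₂ h2s p hp
    have h1 : h₁ (q.1.eval s) = some (q.2.eval s) := by simp [h1s (q.1.eval s)]
    rcases hd (q.1.eval s) with hc | hc
    · simp [h1] at hc
    · rw [heq] at hc; exact hmem hc

lemma sat_exists {V : Type} (s : V → ℕ) :
    ∀ (L : List (SLTerm V × SLTerm V)),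
      L.Pairwise (fun p q => p.1.eval s ≠ q.1.eval s) →
      ∃ h : Heap, SpForm.sat s h (starList L) ∧
        ∀ a, h a ≠ none → ∃ p ∈ L, a = p.1.eval s := by
  intro L
  induction L with
  | nil =>
    intro _
    exact ⟨Heap.emp, rfl, by intro a ha; exact absurd rfl ha⟩
  | cons q L ih =>
    intro hp
    obtain ⟨hq, hpL⟩ := List.pairwise_cons.1 hp
    obtain ⟨h₂, h2s, h2dom⟩ := ih hpL
    refine ⟨Heap.union (fun a => if a = q.1.eval s then some (q.2.eval s) else none) h₂,
      ⟨_, h₂, ?_, rfl, fun a => rfl, h2s⟩, ?_⟩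
    · intro a
      by_cases ha : a = q.1.eval s
      · right
        by_contra hc
        obtain ⟨p, hpmem, rfl⟩ := h2dom a hc
        exact hq p hpmem ha.symm
      · left; simp [ha]
    · intro a ha
      by_cases hc : a = q.1.eval s
      · exact ⟨q, List.mem_cons_self, hc⟩
      · have : h₂ a ≠ none := by
          simp only [Heap.union, Option.orElse, hc] at ha
          simpa using ha
        obtain ⟨p, hpmem, hpe⟩ := h2dom a this
        exact ⟨p, List.mem_cons_of_mem _ hpmem, hpe⟩

theorem satisfiability_iff_gamma {V : Type}
    (PureA : (V → ℕ) → Prop) (L : List (SLTerm V × SLTerm V)) :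
    (∀ (s : V → ℕ) (h : Heap), PureA s → SpForm.sat s h (starList L) →
        (PureA s ∧ L.Pairwise (fun p q => p.1.eval s ≠ q.1.eval s))) ∧
    (∀ s : V → ℕ, PureA s → L.Pairwise (fun p q => p.1.eval s ≠ q.1.eval s) →
        ∃ h : Heap, SpForm.sat s h (starList L)) := by
  constructor
  · intro s h hP hsat
    exact ⟨hP, sat_pairwise s L h hsat⟩
  · intro s _ hpw
    obtain ⟨h, hs, _⟩ := sat_exists s L hpw
    exact ⟨h, hs⟩
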